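/- Let Rad be a root system in a finite-dimensional real inner product space V. If α₁, …, α_r are pairwise orthogonal roots of Rad, then there exist pairwise strongly orthogonal roots β₁, …, β_r of Rad such that the real span of {α₁, …, α_r} equals the real span of {β₁, …, β_r}. -/

import Mathlib

open scoped RealInnerProductSpace

namespace PaperRS

variable {V : Type*} [NormedAddCommGroup V] [InnerProductSpace ℝ V]

/-- The reflection in a root `α`. -/
noncomputable def reflRoot (α x : V) : V := x - (2 * ⟪x, α⟫ / ⟪α, α⟫) • α

/-- `Rad` is a (reduced, crystallographic) root system in `V`. -/
structure IsRootSystem (Rad : Set V) : Prop where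
  finite : Rad.Finite
  nonzero : ∀ α ∈ Rad, α ≠ 0
  spanning : Submodule.span ℝ Rad = ⊤
  integral : ∀ α ∈ Rad, ∀ β ∈ Rad, ∃ n : ℤ, 2 * ⟪β, α⟫ / ⟪α, α⟫ = (n : ℝ)
  reflMem : ∀ α ∈ Rad, ∀ β ∈ Rad, reflRoot α β ∈ Rad
  reduced : ∀ α ∈ Rad, ∀ c : ℝ, c • α ∈ Rad → c = 1 ∨ c = -1

/-- Irreducibility: `Rad` is not the union of two nonempty mutually orthogonal subsets. -/
def IsIrreducible (Rad : Set V) : Prop :=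
  ¬ ∃ R₁ R₂ : Set V, R₁.Nonempty ∧ R₂.Nonempty ∧ Rad = R₁ ∪ R₂ ∧
      ∀ α ∈ R₁, ∀ β ∈ R₂, ⟪α, β⟫ = 0

/-- An involution of the root system `Rad`: an orthogonal linear automorphism `t` of `V`
with `t(Rad) = Rad` and `t ∘ t = id`. -/
structure IsInvolution (Rad : Set V) (t : V ≃ₗᵢ[ℝ] V) : Prop where
  maps : (⇑t) '' Rad = Rad
  invol : ∀ x : V, t (t x) = x

/-- Two roots are strongly orthogonal if neither their sum nor their difference is a root. -/
def StronglyOrthogonal (Rad : Set V) (α β : V) : Prop :=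
  α ≠ β ∧ α ≠ -β ∧ α + β ∉ Rad ∧ α - β ∉ Rad

/-- A vector is regular for `Rad` if it is orthogonal to no root. -/
def IsRegular (Rad : Set V) (v : V) : Prop := ∀ α ∈ Rad, ⟪α, v⟫ ≠ 0

/-- The positive roots determined by a regular vector `v`. -/
def posRoots (Rad : Set V) (v : V) : Set V := {α ∈ Rad | 0 < ⟪α, v⟫}

/-- The base of simple roots determined by a regular vector `v`: the positive roots which
are not sums of two positive roots. -/
def simpleBase (Rad : Set V) (v : V) : Set V :=
  {α ∈ posRoots Rad v | ¬ ∃ β ∈ posRoots Rad v, ∃ γ ∈ posRoots Rad v, α = β + γ}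

/-- A regular vector `v` is an S-chamber vector for an involution `t` if
`(α,v)·(t α,v) > 0` for every complex root `α` (i.e. every root with `t α ≠ ±α`). -/
def IsSChamber (Rad : Set V) (t : V ≃ₗᵢ[ℝ] V) (v : V) : Prop :=
  IsRegular Rad v ∧
    ∀ α ∈ Rad, t α ≠ α → t α ≠ -α → 0 < ⟪α, v⟫ * ⟪t α, v⟫

/-- `P ⊆ Rad` is parabolic if `P ∪ (-P) = Rad` and `P` is closed under root addition. -/
def IsParabolic (Rad P : Set V) : Prop :=
  P ⊆ Rad ∧ (∀ α ∈ Rad, α ∈ P ∨ -α ∈ P) ∧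
    ∀ α ∈ P, ∀ β ∈ P, α + β ∈ Rad → α + β ∈ P

/-- Composition `s_{β 0} ∘ s_{β 1} ∘ ⋯ ∘ s_{β (r-1)}` of the reflections in the roots
`β 0, …, β (r-1)`. -/
noncomputable def reflComp : (r : ℕ) → (Fin r → V) → V → V
  | 0, _ => id
  | r + 1, β => reflRoot (β 0) ∘ reflComp r (fun i => β i.succ)

lemma neg_mem_of {Rad : Set V} (hRS : IsRootSystem Rad) {a : V} (ha : a ∈ Rad) :
    -a ∈ Rad := by
  have hne : ⟪a, a⟫ ≠ 0 := inner_self_ne_zero.2 (hRS.nonzero a ha)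
  have h := hRS.reflMem a ha a ha
  have hc : 2 * ⟪a, a⟫ / ⟪a, a⟫ = (2 : ℝ) := by field_simp
  have he : reflRoot a a = -a := by
    rw [reflRoot, hc, two_smul]; abel
  rwa [he] at h

lemma sum_root_aux {Rad : Set V} (hRS : IsRootSystem Rad) {a b : V}
    (ha : a ∈ Rad) (hb : b ∈ Rad) (horth : ⟪a, b⟫ = 0) (hs : a + b ∈ Rad) :
    ‖a‖ = ‖b‖ ∧ a - b ∈ Rad := by
  have hba : ⟪b, a⟫ = 0 := by rw [real_inner_comm]; exact horth
  have hbne : ⟪b, b⟫ ≠ 0 := inner_self_ne_zero.2 (hRS.nonzero b hb)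
  constructor
  · obtain ⟨n, hn⟩ := hRS.integral (a + b) hs a ha
    have hA : (0:ℝ) < ⟪a, a⟫ := lt_of_le_of_ne real_inner_self_nonneg (Ne.symm (inner_self_ne_zero.2 (hRS.nonzero a ha)))
    have hB : (0:ℝ) < ⟪b, b⟫ := lt_of_le_of_ne real_inner_self_nonneg (Ne.symm (inner_self_ne_zero.2 (hRS.nonzero b hb)))
    have h1 : ⟪a, a + b⟫ = ⟪a, a⟫ := by
      rw [inner_add_right, horth, add_zero]
    have h2 : ⟪a + b, a + b⟫ = ⟪a, a⟫ + ⟪b, b⟫ := by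
      rw [inner_add_left, inner_add_right, inner_add_right, horth, hba]; ring
    rw [h1, h2] at hn
    have hAB : (0:ℝ) < ⟪a, a⟫ + ⟪b, b⟫ := by linarith
    have hn0 : (0:ℝ) < (n:ℝ) := by
      rw [← hn]; positivity
    have hn2 : (n:ℝ) < 2 := by
      rw [← hn, div_lt_iff₀ hAB]; nlinarith
    have : n = 1 := by
      have h0 : (0:ℤ) < n := by exact_mod_cast hn0
      have h2' : n < 2 := by exact_mod_cast hn2
      omega
    rw [this] at hn
    have hAB' : ⟪a, a⟫ = ⟪b, b⟫ := by
      field_simp at hn; push_cast at hn; linarith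
    have := real_inner_self_eq_norm_sq a
    have := real_inner_self_eq_norm_sq b
    nlinarith [norm_nonneg a, norm_nonneg b]
  · have h := hRS.reflMem b hb (a + b) hs
    have hc : 2 * ⟪a + b, b⟫ / ⟪b, b⟫ = (2:ℝ) := by
      rw [inner_add_left, horth, zero_add]; field_simp
    have he : reflRoot b (a + b) = a - b := by
      rw [reflRoot, hc, two_smul]; abel
    rwa [he] at h


lemma improve {Rad : Set V} (hRS : IsRootSystem Rad) {r : ℕ} {b : Fin r → V}
    (hb1 : ∀ i, b i ∈ Rad) (hb2 : ∀ i j, i ≠ j → ⟪b i, b j⟫ = 0)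
    {i j : Fin r} (hij : i ≠ j) (hs : b i + b j ∈ Rad) :
    ∃ b' : Fin r → V, (∀ k, b' k ∈ Rad) ∧ (∀ k l, k ≠ l → ⟪b' k, b' l⟫ = 0) ∧
      Submodule.span ℝ (Set.range b') = Submodule.span ℝ (Set.range b) ∧
      ∑ k, ‖b k‖ ^ 2 < ∑ k, ‖b' k‖ ^ 2 := by
  classical
  obtain ⟨hnorm, hdiff⟩ := sum_root_aux hRS (hb1 i) (hb1 j) (hb2 i j hij) hs
  set x := b i + b j with hx
  set y := b i - b j with hy
  set b' : Fin r → V := fun k => if k = i then x else if k = j then y else b k with hb'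
  have hb'i : b' i = x := by simp [hb']
  have hb'j : b' j = y := by simp [hb', Ne.symm hij]
  have hb'k : ∀ k, k ≠ i → k ≠ j → b' k = b k := by
    intro k h1 h2; simp [hb', h1, h2]
  -- inner products
  have hxy : ⟪x, y⟫ = 0 := by
    have h1 := hb2 i j hij
    have h2 : ⟪b j, b i⟫ = 0 := by rw [real_inner_comm]; exact h1
    have hni := real_inner_self_eq_norm_sq (b i)
    have hnj := real_inner_self_eq_norm_sq (b j)
    rw [hx, hy, inner_add_left, inner_sub_right, inner_sub_right, h1, h2]
    rw [hni, hnj, hnorm]; ring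
  have hxk : ∀ k, k ≠ i → k ≠ j → ⟪x, b k⟫ = 0 := by
    intro k h1 h2
    rw [hx, inner_add_left, hb2 i k (Ne.symm h1), hb2 j k (Ne.symm h2), add_zero]
  have hyk : ∀ k, k ≠ i → k ≠ j → ⟪y, b k⟫ = 0 := by
    intro k h1 h2
    rw [hy, inner_sub_left, hb2 i k (Ne.symm h1), hb2 j k (Ne.symm h2), sub_zero]
  refine ⟨b', ?_, ?_, ?_, ?_⟩
  · intro k
    by_cases h1 : k = i
    · subst h1; rw [hb'i]; exact hs
    by_cases h2 : k = j
    · subst h2; rw [hb'j]; exact hdiff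
    · rw [hb'k k h1 h2]; exact hb1 k
  · intro k l hkl
    by_cases hki : k = i
    · subst hki
      by_cases hlj : l = j
      · subst hlj; rw [hb'i, hb'j]; exact hxy
      · rw [hb'i, hb'k l (Ne.symm hkl) hlj]; exact hxk l (Ne.symm hkl) hlj
    by_cases hkj : k = j
    · subst hkj
      by_cases hli : l = i
      · subst hli; rw [hb'i, hb'j, real_inner_comm]; exact hxy
      · rw [hb'j, hb'k l hli (Ne.symm hkl)]; exact hyk l hli (Ne.symm hkl)
    · rw [hb'k k hki hkj]
      by_cases hli : l = i
      · subst hli; rw [hb'i, real_inner_comm]; exact hxk k hki hkj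
      by_cases hlj : l = j
      · subst hlj; rw [hb'j, real_inner_comm]; exact hyk k hki hkj
      · rw [hb'k l hli hlj]; exact hb2 k l hkl
  · apply Submodule.span_eq_span
    · rintro _ ⟨k, rfl⟩
      by_cases h1 : k = i
      · rw [h1, hb'i, hx]
        exact Submodule.add_mem _ (Submodule.subset_span ⟨i, rfl⟩)
          (Submodule.subset_span ⟨j, rfl⟩)
      by_cases h2 : k = j
      · rw [h2, hb'j, hy]
        exact Submodule.sub_mem _ (Submodule.subset_span ⟨i, rfl⟩)
          (Submodule.subset_span ⟨j, rfl⟩)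
      · rw [hb'k k h1 h2]; exact Submodule.subset_span ⟨k, rfl⟩
    · rintro _ ⟨k, rfl⟩
      have hxm : x ∈ Submodule.span ℝ (Set.range b') :=
        Submodule.subset_span ⟨i, hb'i⟩
      have hym : y ∈ Submodule.span ℝ (Set.range b') :=
        Submodule.subset_span ⟨j, hb'j⟩
      by_cases h1 : k = i
      · have hsum2 : x + y = (2 : ℝ) • b i := by rw [hx, hy]; module
        have : b k = (2⁻¹ : ℝ) • (x + y) := by
          rw [h1, hsum2, smul_smul]; norm_num
        rw [this]
        exact Submodule.smul_mem _ _ (Submodule.add_mem _ hxm hym)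
      by_cases h2 : k = j
      · have hsub2 : x - y = (2 : ℝ) • b j := by rw [hx, hy]; module
        have : b k = (2⁻¹ : ℝ) • (x - y) := by
          rw [h2, hsub2, smul_smul]; norm_num
        rw [this]
        exact Submodule.smul_mem _ _ (Submodule.sub_mem _ hxm hym)
      · exact Submodule.subset_span ⟨k, hb'k k h1 h2⟩
  · have hjmem : j ∈ Finset.univ.erase i := Finset.mem_erase.2 ⟨Ne.symm hij, Finset.mem_univ j⟩
    have key : ∀ f : Fin r → V, ∑ k, ‖f k‖ ^ 2 =
        ‖f i‖ ^ 2 + (‖f j‖ ^ 2 + ∑ k ∈ (Finset.univ.erase i).erase j, ‖f k‖ ^ 2) := by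
      intro f
      rw [Finset.add_sum_erase (Finset.univ.erase i) (fun k => ‖f k‖ ^ 2) hjmem,
        Finset.add_sum_erase Finset.univ (fun k => ‖f k‖ ^ 2) (Finset.mem_univ i)]
    rw [key b, key b']
    have hT : ∑ k ∈ (Finset.univ.erase i).erase j, ‖b' k‖ ^ 2 =
        ∑ k ∈ (Finset.univ.erase i).erase j, ‖b k‖ ^ 2 := by
      apply Finset.sum_congr rfl
      intro k hk
      obtain ⟨hkj, hki'⟩ := Finset.mem_erase.1 hk
      obtain ⟨hki, -⟩ := Finset.mem_erase.1 hki'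
      rw [hb'k k hki hkj]
    rw [hT, hb'i, hb'j]
    have hnx : ‖x‖ ^ 2 = ‖b i‖ ^ 2 + ‖b j‖ ^ 2 := by
      rw [hx, norm_add_sq_real, hb2 i j hij]; ring
    have hny : ‖y‖ ^ 2 = ‖b i‖ ^ 2 + ‖b j‖ ^ 2 := by
      rw [hy, norm_sub_sq_real, hb2 i j hij]; ring
    have hpos : 0 < ‖b i‖ := norm_pos_iff.2 (hRS.nonzero _ (hb1 i))
    have hpos' : 0 < ‖b j‖ := norm_pos_iff.2 (hRS.nonzero _ (hb1 j))
    nlinarith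

/-- every set of pairwise orthogonal roots spans the same subspace as some
set of pairwise strongly orthogonal roots. -/
theorem stmt1 {V : Type*} [NormedAddCommGroup V] [InnerProductSpace ℝ V]
    [FiniteDimensional ℝ V] (Rad : Set V) (hRS : IsRootSystem Rad)
    (r : ℕ) (α : Fin r → V) (hmem : ∀ i, α i ∈ Rad)
    (horth : ∀ i j, i ≠ j → ⟪α i, α j⟫ = 0) :
    ∃ β : Fin r → V, (∀ i, β i ∈ Rad) ∧
      (∀ i j, i ≠ j → StronglyOrthogonal Rad (β i) (β j)) ∧
      Submodule.span ℝ (Set.range α) = Submodule.span ℝ (Set.range β) := by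
  classical
  set S : Set (Fin r → V) := {b | (∀ i, b i ∈ Rad) ∧ (∀ i j, i ≠ j → ⟪b i, b j⟫ = 0) ∧
      Submodule.span ℝ (Set.range b) = Submodule.span ℝ (Set.range α)} with hSdef
  have hSfin : S.Finite := by
    have hsub : S ⊆ Set.pi Set.univ (fun _ : Fin r => Rad) := by
      intro b hb k _; exact hb.1 k
    exact (Set.Finite.pi (fun _ => hRS.finite)).subset hsub
  have hαS : α ∈ S := ⟨hmem, horth, rfl⟩
  obtain ⟨β, hβS, hβmax⟩ :=
    Set.Finite.exists_maximalFor (fun b => ∑ k, ‖b k‖ ^ 2) S hSfin ⟨α, hαS⟩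
  have hmax : ∀ b ∈ S, ∑ k, ‖b k‖ ^ 2 ≤ ∑ k, ‖β k‖ ^ 2 := by
    intro b hb
    by_contra h
    push_neg at h
    exact absurd (hβmax hb (le_of_lt h)) (not_le.2 h)
  obtain ⟨hβ1, hβ2, hβ3⟩ := hβS
  refine ⟨β, hβ1, ?_, hβ3.symm⟩
  intro i j hij
  refine ⟨?_, ?_, ?_, ?_⟩
  · intro h
    have h2 := hβ2 i j hij
    rw [← h] at h2
    exact inner_self_ne_zero.2 (hRS.nonzero _ (hβ1 i)) h2
  · intro h
    have h2 := hβ2 i j hij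
    rw [h, inner_neg_left, neg_eq_zero] at h2
    exact inner_self_ne_zero.2 (hRS.nonzero _ (hβ1 j)) h2
  · intro hs
    obtain ⟨b', hb'1, hb'2, hb'3, hb'4⟩ := improve hRS hβ1 hβ2 hij hs
    have hb'S : b' ∈ S := ⟨hb'1, hb'2, hb'3.trans hβ3⟩
    exact absurd (hmax b' hb'S) (not_le.2 hb'4)
  · intro hd
    set c : Fin r → V := Function.update β j (-β j) with hc
    have hcj : c j = -β j := Function.update_self j (-β j) β
    have hck : ∀ k, k ≠ j → c k = β k := fun k hk => Function.update_of_ne hk _ _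
    have hc1 : ∀ k, c k ∈ Rad := by
      intro k
      by_cases hk : k = j
      · rw [hk, hcj]; exact neg_mem_of hRS (hβ1 j)
      · rw [hck k hk]; exact hβ1 k
    have hc2 : ∀ k l, k ≠ l → ⟪c k, c l⟫ = 0 := by
      intro k l hkl
      by_cases hk : k = j
      · rw [hk, hcj, hck l (hk ▸ (Ne.symm hkl)), inner_neg_left, hβ2 j l (hk ▸ hkl), neg_zero]
      by_cases hl : l = j
      · rw [hl, hcj, hck k hk, inner_neg_right, hβ2 k j (hl ▸ hkl), neg_zero]
      · rw [hck k hk, hck l hl]; exact hβ2 k l hkl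
    have hc3 : Submodule.span ℝ (Set.range c) = Submodule.span ℝ (Set.range β) := by
      apply Submodule.span_eq_span
      · rintro _ ⟨k, rfl⟩
        by_cases hk : k = j
        · rw [hk, hcj]
          exact Submodule.neg_mem _ (Submodule.subset_span ⟨j, rfl⟩)
        · rw [hck k hk]; exact Submodule.subset_span ⟨k, rfl⟩
      · rintro _ ⟨k, rfl⟩
        by_cases hk : k = j
        · rw [hk]
          have : β j = -c j := by rw [hcj, neg_neg]
          rw [this]
          exact Submodule.neg_mem _ (Submodule.subset_span ⟨j, rfl⟩)
        · exact Submodule.subset_span ⟨k, hck k hk⟩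
    have hcsum : c i + c j = β i - β j := by
      rw [hcj, hck i hij, sub_eq_add_neg]
    rw [← hcsum] at hd
    obtain ⟨b', hb'1, hb'2, hb'3, hb'4⟩ := improve hRS hc1 hc2 hij hd
    have hb'S : b' ∈ S := ⟨hb'1, hb'2, hb'3.trans (hc3.trans hβ3)⟩
    have hceq : ∑ k, ‖c k‖ ^ 2 = ∑ k, ‖β k‖ ^ 2 := by
      apply Finset.sum_congr rfl
      intro k _
      by_cases hk : k = j
      · rw [hk, hcj, norm_neg]
      · rw [hck k hk]
    rw [hceq] at hb'4
    exact absurd (hmax b' hb'S) (not_le.2 hb'4)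


end PaperRS
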